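/- Let Γ be a group and let m(Γ) = ⟨Γ; s, d ∣ d⁻¹gd = g·s⁻¹gs and [g, s⁻¹hs] = 1 for all g, h ∈ Γ⟩ be its standard mitosis. Then the canonical homomorphism Γ → m(Γ), sending each g ∈ Γ to the corresponding generator of m(Γ), is injective; that is, Γ embeds into its standard mitosis. -/

import Mathlib

/-- The commutator with the convention `[x, y] := x⁻¹y⁻¹xy`. -/
def pcomm {G : Type*} [Group G] (x y : G) : G := x⁻¹ * y⁻¹ * x * y

def mGen {Γ : Type*} [Group Γ] (g : Γ) : FreeGroup (Γ ⊕ Bool) :=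
  FreeGroup.of (Sum.inl g)

def mS (Γ : Type*) [Group Γ] : FreeGroup (Γ ⊕ Bool) := FreeGroup.of (Sum.inr true)

def mD (Γ : Type*) [Group Γ] : FreeGroup (Γ ⊕ Bool) := FreeGroup.of (Sum.inr false)

def mitosisRels (Γ : Type*) [Group Γ] : Set (FreeGroup (Γ ⊕ Bool)) :=
  ((FreeGroup.map Sum.inl : FreeGroup Γ →* FreeGroup (Γ ⊕ Bool)) ''
      {w : FreeGroup Γ | FreeGroup.lift (id : Γ → Γ) w = 1})
    ∪ {r | ∃ g : Γ, r = (mD Γ)⁻¹ * mGen g * mD Γ * (mGen g * (mS Γ)⁻¹ * mGen g * mS Γ)⁻¹}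
    ∪ {r | ∃ g h : Γ, r = pcomm (mGen g) ((mS Γ)⁻¹ * mGen h * mS Γ)}

abbrev Mitosis (Γ : Type*) [Group Γ] : Type _ := PresentedGroup (mitosisRels Γ)

def mGenM {Γ : Type*} [Group Γ] (g : Γ) : Mitosis Γ := PresentedGroup.of (Sum.inl g)

def mSM (Γ : Type*) [Group Γ] : Mitosis Γ := PresentedGroup.of (Sum.inr true)

def mDM (Γ : Type*) [Group Γ] : Mitosis Γ := PresentedGroup.of (Sum.inr false)

section Model
variable (Γ : Type*) [Group Γ]

/-- The swap permutation of `Γ × Γ`. -/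
def sPerm : Equiv.Perm (Γ × Γ) := Equiv.prodComm Γ Γ

/-- The permutation `(a, b) ↦ (a, a⁻¹b)` of `Γ × Γ`. -/
def dPerm : Equiv.Perm (Γ × Γ) where
  toFun p := (p.1, p.1⁻¹ * p.2)
  invFun p := (p.1, p.1 * p.2)
  left_inv p := by simp
  right_inv p := by simp

/-- Left multiplication on the first coordinate. -/
def ePerm : Γ →* Equiv.Perm (Γ × Γ) :=
  MonoidHom.mk' (fun g => (Equiv.mulLeft g).prodCongr (Equiv.refl Γ))
    (by intro g h; ext p <;> simp [mul_assoc])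

variable {Γ}

lemma ePerm_apply (g : Γ) (p : Γ × Γ) : ePerm Γ g p = (g * p.1, p.2) := rfl

lemma ePerm_symm_apply (g : Γ) (p : Γ × Γ) :
    (ePerm Γ g).symm p = (g⁻¹ * p.1, p.2) := rfl

lemma dPerm_symm_apply (p : Γ × Γ) : (dPerm Γ).symm p = (p.1, p.1 * p.2) := rfl

/-- The map sending generators of the mitosis to permutations of `Γ × Γ`. -/
def mPhi : Γ ⊕ Bool → Equiv.Perm (Γ × Γ) :=
  Sum.elim (ePerm Γ) (fun b => if b then sPerm Γ else dPerm Γ)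

lemma mPhi_rels : ∀ r ∈ mitosisRels Γ, FreeGroup.lift (mPhi (Γ := Γ)) r = 1 := by
  rintro r ((⟨w, hw, rfl⟩ | ⟨g, rfl⟩) | ⟨g, h, rfl⟩)
  · have key : (FreeGroup.lift (mPhi (Γ := Γ))).comp (FreeGroup.map Sum.inl)
        = (ePerm Γ).comp (FreeGroup.lift (id : Γ → Γ)) := by
      apply FreeGroup.ext_hom
      intro x
      simp [mPhi]
    have := congrArg (fun f => f w) key
    simp only [MonoidHom.comp_apply] at this
    rw [this, hw, map_one]
  · have hs : FreeGroup.lift (mPhi (Γ := Γ)) (mS Γ) = sPerm Γ := by simp [mS, mPhi]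
    have hd : FreeGroup.lift (mPhi (Γ := Γ)) (mD Γ) = dPerm Γ := by simp [mD, mPhi]
    have hg : ∀ g : Γ, FreeGroup.lift (mPhi (Γ := Γ)) (mGen g) = ePerm Γ g := by
      intro g; simp [mGen, mPhi]
    simp only [map_mul, map_inv, hs, hd, hg]
    rw [mul_inv_eq_one]
    ext p <;>
      simp [dPerm, sPerm, ePerm_apply, ePerm_symm_apply, dPerm_symm_apply,
        Equiv.Perm.mul_apply, Equiv.Perm.inv_def, Equiv.prodComm, mul_assoc]
  · have hs : FreeGroup.lift (mPhi (Γ := Γ)) (mS Γ) = sPerm Γ := by simp [mS, mPhi]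
    have hg : ∀ g : Γ, FreeGroup.lift (mPhi (Γ := Γ)) (mGen g) = ePerm Γ g := by
      intro g; simp [mGen, mPhi]
    simp only [pcomm, map_mul, map_inv, hs, hg]
    ext p <;>
      simp [sPerm, ePerm_apply, ePerm_symm_apply, Equiv.Perm.mul_apply,
        Equiv.Perm.inv_def, Equiv.prodComm, mul_assoc]

end Model

theorem embeds_into_mitosis (Γ : Type*) [Group Γ] :
    ∃ ι : Γ →* Mitosis Γ,
      (∀ g : Γ, ι g = mGenM g) ∧ Function.Injective ι := by
  -- the canonical map is a homomorphism
  have hmul : ∀ g h : Γ, mGenM (g * h) = mGenM g * mGenM h := by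
    intro g h
    have hrel : mGen g * mGen h * (mGen (g * h))⁻¹ ∈ mitosisRels Γ := by
      left; left
      exact ⟨FreeGroup.of g * FreeGroup.of h * (FreeGroup.of (g * h))⁻¹,
        by simp [mul_assoc], by simp [mGen]⟩
    have h1 : (QuotientGroup.mk (mGen g * mGen h * (mGen (g * h))⁻¹) :
        Mitosis Γ) = 1 :=
      (QuotientGroup.eq_one_iff _).2 (Subgroup.subset_normalClosure hrel)
    have h2 : (mGenM g * mGenM h * (mGenM (g * h))⁻¹ : Mitosis Γ) = 1 := by
      exact h1
    rw [mul_inv_eq_one] at h2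
    exact h2.symm
  refine ⟨MonoidHom.mk' (fun g => mGenM g) hmul, fun g => rfl, ?_⟩
  -- injectivity via the permutation model
  set F := PresentedGroup.toGroup (mPhi_rels (Γ := Γ)) with hF
  intro g h hgh
  have : F (mGenM g) = F (mGenM h) := by
    simpa using congrArg F hgh
  have h2 : ePerm Γ g = ePerm Γ h := by
    simpa [mGenM, hF, PresentedGroup.toGroup.of, mPhi] using this
  have := congrArg (fun e : Equiv.Perm (Γ × Γ) => (e (1, 1)).1) h2
  simpa [ePerm_apply] using this
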